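/- (Theorem 2.) Let G be a group and U : G → Matrix (Fin d) (Fin d) ℂ a map with U(1) = 1, U(gh) = U(g)·U(h), each U(g) unitary, and acting irreducibly (every matrix commuting with all U(g) is a scalar multiple of the identity). Suppose Ψ : (Fin d)⁴ → ℂ is a unit vector satisfying the strong covariance condition (U(g) ⊗ U(g) ⊗ conj(U(g)) ⊗ conj(U(g))) Ψ = Ψ for all g ∈ G, and define R, indexed by (Fin d)³, by R_{(i,j,k),(i',j',k')} = d · Σ_l Ψ(i,j,k,l) · conj(Ψ(i',j',k',l)). Then there exists a matrix T with d³ rows and d columns such that Tᴴ·T = 1, R = T·Tᴴ (so R is an orthogonal projection of rank d), and (U(g) ⊗ U(g) ⊗ conj(U(g)))·T = T·U(g) for all g ∈ G; i.e., R is the projection onto an invariant subspace carrying a subrepresentation equivalent to U. -/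

import Mathlib

open Matrix Kronecker BigOperators

/-- The representation `π(g) = U(g) ⊗ U(g) ⊗ conj(U(g))` on `(ℂ^d)^⊗3`. -/
def pi3 {d : ℕ} {G : Type*} (U : G → Matrix (Fin d) (Fin d) ℂ) (g : G) :
    Matrix (Fin d × Fin d × Fin d) (Fin d × Fin d × Fin d) ℂ :=
  U g ⊗ₖ (U g ⊗ₖ (U g).map (starRingEnd ℂ))

/-- The representation `U(g) ⊗ U(g) ⊗ conj(U(g)) ⊗ conj(U(g))` on `(ℂ^d)^⊗4`. -/
def pi4 {d : ℕ} {G : Type*} (U : G → Matrix (Fin d) (Fin d) ℂ) (g : G) :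
    Matrix (Fin d × Fin d × Fin d × Fin d) (Fin d × Fin d × Fin d × Fin d) ℂ :=
  U g ⊗ₖ (U g ⊗ₖ ((U g).map (starRingEnd ℂ) ⊗ₖ (U g).map (starRingEnd ℂ)))

private lemma sum_comm4 {M : Type*} [AddCommMonoid M] {ι : Type*} [Fintype ι]
    (f : ι → ι → ι → ι → M) :
    ∑ m : ι, ∑ a : ι, ∑ b : ι, ∑ c : ι, f a b c m
      = ∑ a : ι, ∑ b : ι, ∑ c : ι, ∑ m : ι, f a b c m := by
  rw [Finset.sum_comm]
  refine Finset.sum_congr rfl fun a _ => ?_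
  rw [Finset.sum_comm]
  refine Finset.sum_congr rfl fun b _ => ?_
  rw [Finset.sum_comm]

/-- Theorem 2: if `Ψ` is a unit vector satisfying the strong covariance condition for an
irreducible unitary representation `U`, then `R = d·Tr₄|Ψ⟩⟨Ψ|` is an isometry times its
adjoint, i.e. a rank-`d` orthogonal projection onto an invariant subspace carrying a
subrepresentation equivalent to `U`. -/
theorem strongly_covariant_is_extremal (d : ℕ) (G : Type*) [Group G]
    (U : G → Matrix (Fin d) (Fin d) ℂ)
    (hU1 : U 1 = 1)
    (hUm : ∀ g h : G, U (g * h) = U g * U h)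
    (hUu : ∀ g : G, (U g)ᴴ * U g = 1)
    (hirr : ∀ X : Matrix (Fin d) (Fin d) ℂ,
      (∀ g : G, X * U g = U g * X) → ∃ c : ℂ, X = c • (1 : Matrix (Fin d) (Fin d) ℂ))
    (Ψ : Fin d × Fin d × Fin d × Fin d → ℂ)
    (hΨnorm : ∑ x : Fin d × Fin d × Fin d × Fin d, ‖Ψ x‖ ^ 2 = 1)
    (hΨcov : ∀ g : G, (pi4 U g).mulVec Ψ = Ψ)
    (R : Matrix (Fin d × Fin d × Fin d) (Fin d × Fin d × Fin d) ℂ)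
    (hR : ∀ i j k i' j' k' : Fin d,
      R (i, j, k) (i', j', k') =
        (d : ℂ) * ∑ l : Fin d, Ψ (i, j, k, l) * (starRingEnd ℂ) (Ψ (i', j', k', l))) :
    ∃ T : Matrix (Fin d × Fin d × Fin d) (Fin d) ℂ,
      Tᴴ * T = 1 ∧ R = T * Tᴴ ∧ ∀ g : G, pi3 U g * T = T * U g := by
  have hd : d ≠ 0 := by
    rintro rfl
    simp at hΨnorm
  -- basic consequences of unitarity
  have hUr : ∀ g : G, U g * (U g)ᴴ = 1 := fun g => mul_eq_one_comm.mp (hUu g)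
  have hUinv : ∀ g : G, U g⁻¹ = (U g)ᴴ := by
    intro g
    have h1 : U g * U g⁻¹ = 1 := by rw [← hUm, mul_inv_cancel, hU1]
    calc U g⁻¹ = ((U g)ᴴ * U g) * U g⁻¹ := by rw [hUu g, one_mul]
      _ = (U g)ᴴ * (U g * U g⁻¹) := by rw [Matrix.mul_assoc]
      _ = (U g)ᴴ := by rw [h1, Matrix.mul_one]
  -- the reshaped vector
  set M : Matrix (Fin d × Fin d × Fin d) (Fin d) ℂ :=
    fun p l => Ψ (p.1, p.2.1, p.2.2, l) with hMdef
  -- covariance in matrix form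
  have hMcov : ∀ g : G, pi3 U g * M * (U g)ᴴ = M := by
    intro g
    ext p l
    obtain ⟨i, j, k⟩ := p
    have hc := congrFun (hΨcov g) (i, j, k, l)
    simp only [pi4, mulVec, dotProduct, Fintype.sum_prod_type, kroneckerMap_apply,
      Matrix.map_apply] at hc
    simp only [Matrix.mul_apply, conjTranspose_apply, Fintype.sum_prod_type, pi3,
      kroneckerMap_apply, Matrix.map_apply, Finset.sum_mul]
    simp only [hMdef]
    rw [sum_comm4 (fun a b c m =>
      U g i a * (U g j b * (starRingEnd ℂ) (U g k c)) * Ψ (a, b, c, m) * star (U g l m))]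
    rw [← hc]
    refine Finset.sum_congr rfl fun a _ => Finset.sum_congr rfl fun b _ =>
      Finset.sum_congr rfl fun c _ => Finset.sum_congr rfl fun m _ => ?_
    simp only [starRingEnd_apply]
    ring
  -- the intertwining relation for `M`
  have hint : ∀ g : G, pi3 U g * M = M * U g := by
    intro g
    calc pi3 U g * M = pi3 U g * M * ((U g)ᴴ * U g) := by rw [hUu g, Matrix.mul_one]
      _ = (pi3 U g * M * (U g)ᴴ) * U g := by rw [Matrix.mul_assoc (pi3 U g * M)]
      _ = M * U g := by rw [hMcov g]
  -- `pi3` is conjugate-transpose compatible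
  have hpi3c : ∀ g : G, (pi3 U g)ᴴ = pi3 U g⁻¹ := by
    intro g
    ext p q
    obtain ⟨i, j, k⟩ := p
    obtain ⟨a, b, c⟩ := q
    simp only [pi3, conjTranspose_apply, kroneckerMap_apply, Matrix.map_apply, hUinv g,
      conjTranspose_apply, starRingEnd_apply, star_mul', star_star]
  -- the adjoint intertwining relation
  have hadj : ∀ g : G, Mᴴ * pi3 U g = U g * Mᴴ := by
    intro g
    have h := congrArg Matrix.conjTranspose (hint g⁻¹)
    have hUg : (U g⁻¹)ᴴ = U g := by rw [← hUinv g⁻¹, inv_inv]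
    simp only [Matrix.conjTranspose_mul, hpi3c g⁻¹, inv_inv, hUg] at h
    exact h
  -- `Mᴴ M` commutes with the representation
  have hcomm : ∀ g : G, (Mᴴ * M) * U g = U g * (Mᴴ * M) := by
    intro g
    calc (Mᴴ * M) * U g = Mᴴ * (M * U g) := by rw [Matrix.mul_assoc]
      _ = Mᴴ * (pi3 U g * M) := by rw [hint g]
      _ = (Mᴴ * pi3 U g) * M := by rw [Matrix.mul_assoc]
      _ = (U g * Mᴴ) * M := by rw [hadj g]
      _ = U g * (Mᴴ * M) := by rw [Matrix.mul_assoc]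
  obtain ⟨c, hc⟩ := hirr (Mᴴ * M) hcomm
  -- compute the trace to identify the constant
  have htr : Matrix.trace (Mᴴ * M) = 1 := by
    have : Matrix.trace (Mᴴ * M)
        = ((∑ x : Fin d × Fin d × Fin d × Fin d, ‖Ψ x‖ ^ 2 : ℝ) : ℂ) := by
      simp only [Matrix.trace, Matrix.diag, Matrix.mul_apply, conjTranspose_apply,
        Fintype.sum_prod_type]
      simp only [hMdef]
      rw [sum_comm4 (fun i j k l => star (Ψ (i, j, k, l)) * Ψ (i, j, k, l))]
      push_cast
      refine Finset.sum_congr rfl fun a _ => Finset.sum_congr rfl fun b _ =>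
        Finset.sum_congr rfl fun c' _ => Finset.sum_congr rfl fun m _ => ?_
      rw [Complex.star_def, show ((‖Ψ (a, b, c', m)‖ : ℝ) : ℂ) ^ 2
          = (((‖Ψ (a, b, c', m)‖ ^ 2 : ℝ)) : ℂ) by push_cast; ring,
        Complex.sq_norm, ← Complex.mul_conj]
      ring
    rw [this, hΨnorm]
    norm_num
  have hcd : c * d = 1 := by
    have := htr
    rw [hc] at this
    simpa [Matrix.trace_smul, Matrix.trace_one, mul_comm] using this
  have hdMM : (d : ℂ) • (Mᴴ * M) = 1 := by
    rw [hc, smul_smul]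
    rw [show (d : ℂ) * c = 1 by rw [mul_comm]; exact hcd, one_smul]
  -- the isometry
  refine ⟨((Real.sqrt d : ℝ) : ℂ) • M, ?_, ?_, ?_⟩
  · rw [Matrix.conjTranspose_smul, Matrix.smul_mul, Matrix.mul_smul, smul_smul]
    have : star ((Real.sqrt d : ℝ) : ℂ) * ((Real.sqrt d : ℝ) : ℂ) = (d : ℂ) := by
      rw [Complex.star_def, Complex.conj_ofReal, ← Complex.ofReal_mul,
        Real.mul_self_sqrt (by positivity)]
      norm_num
    rw [this]
    exact hdMM
  · ext p q
    obtain ⟨i, j, k⟩ := p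
    obtain ⟨i', j', k'⟩ := q
    rw [hR i j k i' j' k']
    simp only [Matrix.mul_apply, conjTranspose_apply, Matrix.smul_apply, smul_eq_mul,
      star_mul', starRingEnd_apply]
    simp only [hMdef]
    rw [Finset.mul_sum]
    have hs : ((Real.sqrt d : ℝ) : ℂ) * ((Real.sqrt d : ℝ) : ℂ) = (d : ℂ) := by
      rw [← Complex.ofReal_mul, Real.mul_self_sqrt (by positivity)]
      norm_num
    have hstar : star ((Real.sqrt d : ℝ) : ℂ) = ((Real.sqrt d : ℝ) : ℂ) := by
      rw [Complex.star_def, Complex.conj_ofReal]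
    refine Finset.sum_congr rfl fun l _ => ?_
    rw [hstar, ← hs]
    ring
  · intro g
    rw [Matrix.mul_smul, Matrix.smul_mul, hint g]
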